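/- Let M be a finite metric space with at least 3 points that is generic, i.e., s(M) > 0, t(M) > 0, and e(M) > 0. Let r satisfy 0 < r < min{ s(M)/4, e(M)/4, t(M)/6 }. Then the sphere S_r(M) = { X ∈ GHSpace : dist(M, X) = r } of radius r centered at (the isometry class of) M is a path-connected subset of GHSpace. -/

import Mathlib

open scoped ENNReal

/-- A correspondence between `X` and `Y`: a relation such that both projections are
surjective on it. -/
def IsCorrespondence {X Y : Type*} (R : Set (X × Y)) : Prop :=
  (∀ x : X, ∃ y : Y, (x, y) ∈ R) ∧ ∀ y : Y, ∃ x : X, (x, y) ∈ R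

/-- The distortion of a relation between two metric spaces, with values in `[0,∞]`. -/
noncomputable def relDis {X Y : Type*} [MetricSpace X] [MetricSpace Y]
    (σ : Set (X × Y)) : ℝ≥0∞ :=
  ⨆ (p ∈ σ) (q ∈ σ), ENNReal.ofReal |dist (Prod.fst p) (Prod.fst q) -
    dist (Prod.snd p) (Prod.snd q)|

/-- `s(M)`: the infimum of distances between distinct points of `M`. -/
noncomputable def sSpec (M : Type*) [MetricSpace M] : ℝ≥0∞ :=
  ⨅ (x : M) (y : M) (_ : x ≠ y), edist x y

/-- The distortion of a self-map of a metric space, with values in `[0,∞]`. -/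
noncomputable def mapDis {M : Type*} [MetricSpace M] (f : M → M) : ℝ≥0∞ :=
  ⨆ (x : M) (y : M), ENNReal.ofReal |dist x y - dist (f x) (f y)|

/-- `e(M)`: the infimum of distortions of non-identity bijections of `M`. -/
noncomputable def eSpec (M : Type*) [MetricSpace M] : ℝ≥0∞ :=
  ⨅ (f : M ≃ M) (_ : f ≠ Equiv.refl M), mapDis (f : M → M)

/-- `t(M)`: the infimum of the triangle inequality defects over triples of pairwise
distinct points of `M`. -/
noncomputable def tSpec (M : Type*) [MetricSpace M] : ℝ≥0∞ :=
  ⨅ (x : M) (y : M) (z : M) (_ : x ≠ y) (_ : y ≠ z) (_ : x ≠ z),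
    ENNReal.ofReal (dist x y + dist y z - dist x z)

namespace SmallSphereAux

open Metric Set Function GromovHausdorff

noncomputable section

/-- Build a metric space structure from a distance function. -/
def remetrize (X : Type) (d : X → X → ℝ)
    (h0 : ∀ x, d x x = 0) (hs : ∀ x y, d x y = d y x)
    (htri : ∀ x y z, d x z ≤ d x y + d y z)
    (hpos : ∀ x y, x ≠ y → d x y ≠ 0) : MetricSpace X where
  dist := d
  dist_self := h0
  dist_comm := hs
  dist_triangle := htri
  eq_of_dist_eq_zero := fun {x y} h => by by_contra hne; exact hpos x y hne h

theorem remetrize_dist (X : Type) (d : X → X → ℝ) (h0) (hs) (htri) (hpos) (x y : X) :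
    @dist X (remetrize X d h0 hs htri hpos).toDist x y = d x y := rfl


/-- Wrapper to keep metric-space structures out of the local instance cache. -/
structure MB (X : Type) where
  m : MetricSpace X

/-- Wrapper for compactness facts about wrapped metrics. -/
structure CPack (X : Type) (b : MB X) : Prop where
  c : @CompactSpace X b.m.toUniformSpace.toTopologicalSpace

/-- Transfer compactness through a "locally short" surjection. -/
theorem aux_compactSpace {X Y : Type} [MetricSpace X] [MetricSpace Y] [CompactSpace X]
    (f : X → Y) (hf : Function.Surjective f) {δ κ : ℝ} (hδ : 0 < δ) (hκ : 0 < κ)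
    (hb : ∀ x y : X, dist x y < δ → dist (f x) (f y) ≤ κ * dist x y) : CompactSpace Y := by
  have hc : Continuous f := by
    rw [Metric.continuous_iff]
    intro b ε hε
    refine ⟨min δ (ε / κ), lt_min hδ (by positivity), fun a ha => ?_⟩
    have h2 := hb a b (lt_of_lt_of_le ha (min_le_left _ _))
    have h3 : dist a b < ε / κ := lt_of_lt_of_le ha (min_le_right _ _)
    calc dist (f a) (f b) ≤ κ * dist a b := h2
      _ < κ * (ε / κ) := by exact mul_lt_mul_of_pos_left h3 hκ
      _ = ε := by field_simp
  refine ⟨?_⟩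
  rw [← hf.range_eq]
  exact isCompact_range hc

/-- Two equal metrics give the same point of Gromov-Hausdorff space. -/
theorem aux_toGHSpace_congr {X : Type} [Nonempty X] (m1 m2 : MetricSpace X)
    (c1 : @CompactSpace X m1.toUniformSpace.toTopologicalSpace)
    (c2 : @CompactSpace X m2.toUniformSpace.toTopologicalSpace)
    (h : ∀ x y, @dist X m1.toDist x y = @dist X m2.toDist x y) :
    @toGHSpace X m1 c1 _ = @toGHSpace X m2 c2 _ := by
  have : m1 = m2 := MetricSpace.ext (by ext x y; exact h x y)
  subst this
  rfl

/-- Upper bound for the Gromov-Hausdorff distance via an almost-isometric surjection. -/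
theorem aux_ghdist_le {M X : Type} [MetricSpace M] [CompactSpace M] [Nonempty M]
    [MetricSpace X] [CompactSpace X] [Nonempty X]
    (g : X → M) (hg : Function.Surjective g) {ε : ℝ} (hε : 0 < ε)
    (hdev : ∀ x y : X, |dist x y - dist (g x) (g y)| ≤ 2 * ε) :
    dist (toGHSpace M) (toGHSpace X) ≤ ε := by
  have H : ∀ p q : X, |dist (g p) (g q) - dist (id p) (id q)| ≤ 2 * ε := by
    intro p q
    rw [abs_sub_comm]
    simpa using hdev p q
  letI mS : MetricSpace (M ⊕ X) := glueMetricApprox g id ε hε H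
  have isom_l : Isometry (Sum.inl : M → M ⊕ X) := Isometry.of_dist_eq fun a b => rfl
  have isom_r : Isometry (Sum.inr : X → M ⊕ X) := Isometry.of_dist_eq fun a b => rfl
  haveI : CompactSpace (M ⊕ X) := by
    refine ⟨?_⟩
    have : (univ : Set (M ⊕ X)) = range Sum.inl ∪ range Sum.inr := by
      ext p; cases p <;> simp
    rw [this]
    exact (isCompact_range isom_l.continuous).union (isCompact_range isom_r.continuous)
  have hHD : hausdorffDist (range (Sum.inl : M → M ⊕ X)) (range (Sum.inr : X → M ⊕ X)) ≤ ε := by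
    apply hausdorffDist_le_of_mem_dist hε.le
    · rintro _ ⟨m, rfl⟩
      obtain ⟨x, rfl⟩ := hg m
      exact ⟨Sum.inr x, mem_range_self _, le_of_eq (glueDist_glued_points g id ε x)⟩
    · rintro _ ⟨x, rfl⟩
      refine ⟨Sum.inl (g x), mem_range_self _, ?_⟩
      rw [dist_comm]
      exact le_of_eq (glueDist_glued_points g id ε x)
  have := ghDist_le_hausdorffDist isom_l isom_r
  rw [ghDist] at this
  exact this.trans hHD

/-- Master lemma: a space whose "deviation profile" over `M` is bounded by `2r` and attains
`2r` lies exactly on the sphere of radius `r` around `M`. -/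
theorem aux_sphere_eq {M X : Type} [MetricSpace M] [Fintype M] [Nonempty M]
    [MetricSpace X] [CompactSpace X] [Nonempty X] {r : ℝ} (hr0 : 0 < r)
    (hsR : ∀ m m' : M, m ≠ m' → 4 * r < dist m m')
    (heR : ∀ f : M ≃ M, f ≠ Equiv.refl M → ∃ m m', 4 * r < |dist m m' - dist (f m) (f m')|)
    (g : X → M) (hg : Function.Surjective g)
    (hdev : ∀ x y : X, |dist x y - dist (g x) (g y)| ≤ 2 * r)
    (hwit : ∃ x y : X, |dist x y - dist (g x) (g y)| = 2 * r) :
    dist (toGHSpace M) (toGHSpace X) = r := by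
  classical
  have hub : dist (toGHSpace M) (toGHSpace X) ≤ r := aux_ghdist_le g hg hr0 hdev
  by_contra hne
  have hlt : dist (toGHSpace M) (toGHSpace X) < r := lt_of_le_of_ne hub hne
  set Y := OptimalGHCoupling M X with hY
  set Φ : M → Y := optimalGHInjl M X with hΦ
  set Ψ : X → Y := optimalGHInjr M X with hΨ
  have isomΦ : Isometry Φ := isometry_optimalGHInjl M X
  have isomΨ : Isometry Ψ := isometry_optimalGHInjr M X
  have hHD : hausdorffDist (range Φ) (range Ψ) < r := by
    rw [hausdorffDist_optimal, ghDist]; exact hlt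
  have hcΦ : IsCompact (range Φ) := isCompact_range isomΦ.continuous
  have hcΨ : IsCompact (range Ψ) := isCompact_range isomΨ.continuous
  have hfin : EMetric.hausdorffEdist (range Φ) (range Ψ) ≠ ⊤ :=
    Metric.hausdorffEdist_ne_top_of_nonempty_of_bounded (range_nonempty _) (range_nonempty _)
      hcΦ.isBounded hcΨ.isBounded
  have hfin' : EMetric.hausdorffEdist (range Ψ) (range Φ) ≠ ⊤ := by
    rw [EMetric.hausdorffEdist, Metric.hausdorffEDist_comm]; exact hfin
  have key : ∀ x : X, ∃ m : M, dist (Ψ x) (Φ m) < r := by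
    intro x
    have h1 : infDist (Ψ x) (range Φ) ≤ hausdorffDist (range Ψ) (range Φ) :=
      infDist_le_hausdorffDist_of_mem (mem_range_self x) hfin'
    rw [hausdorffDist_comm] at h1
    obtain ⟨p, hp, hpd⟩ := hcΦ.exists_infDist_eq_dist (range_nonempty _) (Ψ x)
    obtain ⟨m, rfl⟩ := hp
    exact ⟨m, by rw [← hpd]; exact lt_of_le_of_lt h1 hHD⟩
  set φ : X → M := fun x => (key x).choose with hφdef
  have hφ : ∀ x, dist (Ψ x) (Φ (φ x)) < r := fun x => (key x).choose_spec
  have hφdev : ∀ x y : X, |dist x y - dist (φ x) (φ y)| < 2 * r := by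
    intro x y
    have h1 : |dist x y - dist (φ x) (φ y)| ≤
        dist (Ψ x) (Φ (φ x)) + dist (Ψ y) (Φ (φ y)) := by
      have h := dist_dist_dist_le (Ψ x) (Ψ y) (Φ (φ x)) (Φ (φ y))
      rwa [Real.dist_eq, isomΨ.dist_eq, isomΦ.dist_eq] at h
    calc |dist x y - dist (φ x) (φ y)|
        ≤ dist (Ψ x) (Φ (φ x)) + dist (Ψ y) (Φ (φ y)) := h1
      _ < r + r := add_lt_add (hφ x) (hφ y)
      _ = 2 * r := by ring
  have hφsurj : Function.Surjective φ := by
    intro m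
    have h1 : infDist (Φ m) (range Ψ) ≤ hausdorffDist (range Φ) (range Ψ) :=
      infDist_le_hausdorffDist_of_mem (mem_range_self m) hfin
    obtain ⟨p, hp, hpd⟩ := hcΨ.exists_infDist_eq_dist (range_nonempty _) (Φ m)
    obtain ⟨x, rfl⟩ := hp
    have h2 : dist (Φ m) (Ψ x) < r := by rw [← hpd]; exact lt_of_le_of_lt h1 hHD
    refine ⟨x, ?_⟩
    by_contra hne2
    have h3 : dist (Φ (φ x)) (Φ m) ≤ dist (Φ (φ x)) (Ψ x) + dist (Ψ x) (Φ m) :=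
      dist_triangle _ _ _
    rw [dist_comm (Φ (φ x)) (Ψ x)] at h3
    have h4 : dist (φ x) m < 2 * r := by
      rw [← isomΦ.dist_eq]
      calc dist (Φ (φ x)) (Φ m) ≤ dist (Ψ x) (Φ (φ x)) + dist (Ψ x) (Φ m) := h3
        _ < r + r := add_lt_add (hφ x) (by rwa [dist_comm] at h2)
        _ = 2 * r := by ring
    have h5 := hsR (φ x) m hne2
    linarith
  have hfib : ∀ x y : X, g x = g y → φ x = φ y := by
    intro x y hgxy
    by_contra hne2
    have h1 : dist x y ≤ 2 * r := by
      have := hdev x y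
      rw [hgxy, dist_self] at this
      rw [abs_le] at this
      linarith [this.2]
    have h2 := hφdev x y
    have h3 := hsR (φ x) (φ y) hne2
    rw [abs_lt] at h2
    linarith [h2.1]
  set f : M → M := fun m => φ (Function.surjInv hg m) with hfdef
  have hfg : ∀ x : X, φ x = f (g x) := by
    intro x
    exact hfib x (Function.surjInv hg (g x)) (Function.surjInv_eq hg (g x)).symm
  have hfsurj : Function.Surjective f := by
    intro m
    obtain ⟨x, hx⟩ := hφsurj m
    exact ⟨g x, by rw [← hfg x, hx]⟩
  have hfinj : Function.Injective f := Finite.injective_iff_surjective.2 hfsurj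
  by_cases hid : ∀ m : M, f m = m
  · obtain ⟨x, y, hxy⟩ := hwit
    have h1 : dist (g x) (g y) = dist (φ x) (φ y) := by
      rw [hfg x, hfg y, hid (g x), hid (g y)]
    rw [h1] at hxy
    have := hφdev x y
    rw [hxy] at this
    exact lt_irrefl _ this
  · push_neg at hid
    obtain ⟨m0, hm0⟩ := hid
    set fE : M ≃ M := Equiv.ofBijective f ⟨hfinj, hfsurj⟩ with hfE
    have hfEne : fE ≠ Equiv.refl M := by
      intro h
      apply hm0
      have : fE m0 = m0 := by rw [h]; rfl
      exact this
    obtain ⟨m, m', hmm'⟩ := heR fE hfEne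
    have hfEm : ∀ a : M, fE a = f a := fun a => rfl
    rw [hfEm, hfEm] at hmm'
    set x := Function.surjInv hg m with hx
    set y := Function.surjInv hg m' with hy
    have hgx : g x = m := Function.surjInv_eq hg m
    have hgy : g y = m' := Function.surjInv_eq hg m'
    have h1 : |dist m m' - dist x y| ≤ 2 * r := by
      rw [← hgx, ← hgy, abs_sub_comm]
      exact hdev x y
    have h2 : |dist x y - dist (f m) (f m')| < 2 * r := by
      have := hφdev x y
      rwa [hfg x, hfg y, hgx, hgy] at this
    have h3 : |dist m m' - dist (f m) (f m')| ≤
        |dist m m' - dist x y| + |dist x y - dist (f m) (f m')| := abs_sub_le _ _ _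
    linarith

theorem extract_gen {r c : ℝ} (hc : 0 < c) {e : ℝ≥0∞} (hr0 : 0 < r)
    (h : ENNReal.ofReal r < e / ENNReal.ofReal c) (d : ℝ) (hd : e ≤ ENNReal.ofReal d) :
    c * r < d := by
  have hc0 : ENNReal.ofReal c ≠ 0 := by simp [hc, hc.not_ge]
  have hct : ENNReal.ofReal c ≠ ⊤ := ENNReal.ofReal_ne_top
  rw [ENNReal.lt_div_iff_mul_lt (Or.inl hc0) (Or.inl hct)] at h
  have h2 : ENNReal.ofReal (r * c) < ENNReal.ofReal d := by
    rw [ENNReal.ofReal_mul hr0.le]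
    exact lt_of_lt_of_le h hd
  have h3 := (ENNReal.ofReal_lt_ofReal_iff_of_nonneg (by positivity)).1 h2
  linarith

theorem extract_s {M : Type} [MetricSpace M] {r : ℝ} (hr0 : 0 < r)
    (h : ENNReal.ofReal r < sSpec M / 4) :
    ∀ m m' : M, m ≠ m' → 4 * r < dist m m' := by
  intro m m' hne
  have h1 : sSpec M ≤ edist m m' := iInf_le_of_le m (iInf_le_of_le m' (iInf_le _ hne))
  have h4 : (4 : ℝ≥0∞) = ENNReal.ofReal 4 := by norm_num
  rw [h4] at h
  have := extract_gen (by norm_num : (0:ℝ) < 4) hr0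
    (lt_of_lt_of_le h (ENNReal.div_le_div_right h1 _)) (dist m m') (le_of_eq (edist_dist m m'))
  linarith

theorem extract_t {M : Type} [MetricSpace M] {r : ℝ} (hr0 : 0 < r)
    (h : ENNReal.ofReal r < tSpec M / 6) :
    ∀ x y z : M, x ≠ y → y ≠ z → x ≠ z → 6 * r < dist x y + dist y z - dist x z := by
  intro x y z h1 h2 h3
  have hle : tSpec M ≤ ENNReal.ofReal (dist x y + dist y z - dist x z) :=
    iInf_le_of_le x (iInf_le_of_le y (iInf_le_of_le z
      (iInf_le_of_le h1 (iInf_le_of_le h2 (iInf_le _ h3)))))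
  have h4 : (6 : ℝ≥0∞) = ENNReal.ofReal 6 := by norm_num
  rw [h4] at h
  have := extract_gen (by norm_num : (0:ℝ) < 6) hr0
    (lt_of_lt_of_le h (ENNReal.div_le_div_right hle _)) _ le_rfl
  linarith

theorem extract_e {M : Type} [MetricSpace M] {r : ℝ} (hr0 : 0 < r)
    (h : ENNReal.ofReal r < eSpec M / 4) :
    ∀ f : M ≃ M, f ≠ Equiv.refl M → ∃ m m', 4 * r < |dist m m' - dist (f m) (f m')| := by
  intro f hf
  have hle : eSpec M ≤ mapDis (f : M → M) := iInf_le_of_le f (iInf_le _ hf)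
  have h4 : (4 : ℝ≥0∞) = ENNReal.ofReal 4 := by norm_num
  rw [h4] at h
  have h2 : ENNReal.ofReal (r * 4) < mapDis (f : M → M) := by
    have hc0 : ENNReal.ofReal (4:ℝ) ≠ 0 := by norm_num
    have h' := lt_of_lt_of_le h (ENNReal.div_le_div_right hle _)
    rw [ENNReal.lt_div_iff_mul_lt (Or.inl hc0) (Or.inl ENNReal.ofReal_ne_top)] at h'
    calc ENNReal.ofReal (r * 4) = ENNReal.ofReal r * ENNReal.ofReal 4 :=
          ENNReal.ofReal_mul hr0.le
      _ < mapDis (f : M → M) := h'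
  rw [mapDis, lt_iSup_iff] at h2
  obtain ⟨m, hm⟩ := h2
  rw [lt_iSup_iff] at hm
  obtain ⟨m', hm'⟩ := hm
  refine ⟨m, m', ?_⟩
  have := (ENNReal.ofReal_lt_ofReal_iff_of_nonneg (by positivity)).1 hm'
  linarith

/-- Join two points of a set in GH space by a globally Lipschitz curve inside the set. -/
theorem aux_joinedIn {S : Set GHSpace} (f : ℝ → GHSpace) {K : ℝ}
    (hf : ∀ u v : ℝ, dist (f u) (f v) ≤ K * |u - v|)
    (hmem : ∀ u : ℝ, f u ∈ S) : JoinedIn S (f 0) (f 1) := by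
  have hcont : Continuous fun t : unitInterval => f ↑t := by
    rw [Metric.continuous_iff]
    intro b ε hε
    refine ⟨ε / (|K| + 1), by positivity, fun a ha => ?_⟩
    have h1 := hf ↑a ↑b
    have h2 : |(a:ℝ) - b| = dist a b := by rw [Subtype.dist_eq, Real.dist_eq]
    have habs : K * |(a:ℝ) - b| ≤ |K| * |(a:ℝ) - b| :=
      mul_le_mul_of_nonneg_right (le_abs_self K) (abs_nonneg _)
    have h3 : |K| * |(a:ℝ) - b| < ε := by
      rw [h2]
      calc |K| * dist a b ≤ (|K| + 1) * dist a b := by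
            nlinarith [dist_nonneg (x := a) (y := b), abs_nonneg K]
        _ < (|K| + 1) * (ε / (|K| + 1)) := by
            exact mul_lt_mul_of_pos_left ha (by positivity)
        _ = ε := by field_simp
    calc dist (f ↑a) (f ↑b) ≤ K * |(a:ℝ) - b| := h1
      _ ≤ |K| * |(a:ℝ) - b| := habs
      _ < ε := h3
  refine ⟨⟨⟨fun t => f ↑t, hcont⟩, ?_, ?_⟩, fun t => hmem ↑t⟩
  · simp
  · simp

end

end SmallSphereAux

set_option maxHeartbeats 8000000 in
open Metric Set Function GromovHausdorff SmallSphereAux in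
theorem small_sphere_isPathConnected {M : Type} [MetricSpace M] [Fintype M] [Nonempty M]
    (h3 : 3 ≤ Fintype.card M)
    (hs : 0 < sSpec M) (ht : 0 < tSpec M) (he : 0 < eSpec M)
    (r : ℝ) (hr0 : 0 < r)
    (hr : ENNReal.ofReal r < min (sSpec M / 4) (min (eSpec M / 4) (tSpec M / 6))) :
    IsPathConnected {X : GromovHausdorff.GHSpace |
      dist (GromovHausdorff.toGHSpace M) X = r} := by
  classical
  have hsR := extract_s hr0 (hr.trans_le (min_le_left _ _))
  have heR := extract_e hr0 (hr.trans_le ((min_le_right _ _).trans (min_le_left _ _)))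
  have htR := extract_t hr0 (hr.trans_le ((min_le_right _ _).trans (min_le_right _ _)))
  obtain ⟨mA, mB, hmAB⟩ := Fintype.exists_pair_of_one_lt_card
    (show 1 < Fintype.card M by omega)
  -- the endpoint metric on M : all distances inflated by 2r
  set dZ : M → M → ℝ := fun a b => dist a b + (if a = b then 0 else 2 * r) with hdZdef
  have hdZnn : ∀ a b, 0 ≤ dZ a b := by
    intro a b
    have h1 : (0:ℝ) ≤ (if a = b then 0 else 2 * r) := by split <;> linarith
    have hd := dist_nonneg (x := a) (y := b)
    simp only [hdZdef]
    linarith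
  have hdZ0 : ∀ a, dZ a a = 0 := by intro a; simp [hdZdef]
  have hdZs : ∀ a b, dZ a b = dZ b a := by
    intro a b
    simp only [hdZdef, dist_comm a b]
    congr 1
    by_cases h : a = b
    · simp [h]
    · rw [if_neg h, if_neg (fun hba => h hba.symm)]
  have hdZtri : ∀ a b c, dZ a c ≤ dZ a b + dZ b c := by
    intro a b c
    by_cases hab : a = b
    · subst hab
      rw [hdZ0 a]
      linarith [hdZnn a c]
    · by_cases hbc : b = c
      · subst hbc
        rw [hdZ0 b]
        linarith [hdZnn a b]
      · by_cases hac : a = c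
        · subst hac
          rw [hdZ0 a]
          linarith [hdZnn a b, hdZnn b a]
        · simp only [hdZdef, if_neg hab, if_neg hbc, if_neg hac]
          have := dist_triangle a b c
          linarith
  have hdZpos : ∀ a b, a ≠ b → dZ a b ≠ 0 := by
    intro a b hne
    have : 0 < dZ a b := by
      simp only [hdZdef, if_neg hne]
      have := dist_nonneg (x := a) (y := b)
      linarith
    exact ne_of_gt this
  set mZ : MB M := ⟨remetrize M dZ hdZ0 hdZs hdZtri hdZpos⟩ with hmZdef
  have hcZ : CPack M mZ := ⟨@Finite.compactSpace M mZ.m.toUniformSpace.toTopologicalSpace _⟩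
  set zC : GromovHausdorff.GHSpace := @GromovHausdorff.toGHSpace M mZ.m hcZ.c _ with hzCdef
  have hzCS : dist (GromovHausdorff.toGHSpace M) zC = r := by
    rw [hzCdef]
    refine @aux_sphere_eq M M _ _ _ mZ.m hcZ.c _ r hr0 hsR heR id
      Function.surjective_id ?_ ?_
    · intro a b
      show |dZ a b - dist a b| ≤ 2 * r
      simp only [hdZdef]
      by_cases h : a = b
      · simp [h]
        positivity
      · rw [if_neg h]
        rw [show dist a b + 2 * r - dist a b = 2 * r by ring, abs_of_nonneg (by positivity)]
    · refine ⟨mA, mB, ?_⟩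
      show |dZ mA mB - dist mA mB| = 2 * r
      simp only [hdZdef, if_neg hmAB]
      rw [show dist mA mB + 2 * r - dist mA mB = 2 * r by ring, abs_of_nonneg (by positivity)]
  refine ⟨zC, hzCS, ?_⟩
  intro X hX
  refine JoinedIn.symm ?_
  have hX' : dist (GromovHausdorff.toGHSpace M) X = r := hX
  have hXr : GromovHausdorff.toGHSpace X.Rep = X := X.toGHSpace_rep
  have hdistX : dist (GromovHausdorff.toGHSpace M) (GromovHausdorff.toGHSpace X.Rep) = r := by
    rw [hXr]; exact hX'
  -- optimal coupling and the nearest point projection g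
  set Φ : M → GromovHausdorff.OptimalGHCoupling M X.Rep :=
    GromovHausdorff.optimalGHInjl M X.Rep with hΦdef
  set Ψ : X.Rep → GromovHausdorff.OptimalGHCoupling M X.Rep :=
    GromovHausdorff.optimalGHInjr M X.Rep with hΨdef
  have isomΦ : Isometry Φ := GromovHausdorff.isometry_optimalGHInjl M X.Rep
  have isomΨ : Isometry Ψ := GromovHausdorff.isometry_optimalGHInjr M X.Rep
  have hHD : hausdorffDist (range Φ) (range Ψ) = r := by
    rw [hΦdef, hΨdef, GromovHausdorff.hausdorffDist_optimal, GromovHausdorff.ghDist]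
    exact hdistX
  have hcΦ : IsCompact (range Φ) := isCompact_range isomΦ.continuous
  have hcΨ : IsCompact (range Ψ) := isCompact_range isomΨ.continuous
  have hfin : EMetric.hausdorffEdist (range Φ) (range Ψ) ≠ ⊤ :=
    Metric.hausdorffEdist_ne_top_of_nonempty_of_bounded (range_nonempty _) (range_nonempty _)
      hcΦ.isBounded hcΨ.isBounded
  have hfin' : EMetric.hausdorffEdist (range Ψ) (range Φ) ≠ ⊤ := by
    rw [EMetric.hausdorffEdist, Metric.hausdorffEDist_comm]; exact hfin
  have key : ∀ x : X.Rep, ∃ m : M, dist (Ψ x) (Φ m) ≤ r := by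
    intro x
    have h1 : infDist (Ψ x) (range Φ) ≤ hausdorffDist (range Ψ) (range Φ) :=
      infDist_le_hausdorffDist_of_mem (mem_range_self x) hfin'
    rw [hausdorffDist_comm] at h1
    obtain ⟨p, hp, hpd⟩ := hcΦ.exists_infDist_eq_dist (range_nonempty _) (Ψ x)
    obtain ⟨m, rfl⟩ := hp
    refine ⟨m, ?_⟩
    rw [← hpd]
    rw [hHD] at h1
    exact h1
  set g : X.Rep → M := fun x => (key x).choose with hgdef
  have hgd : ∀ x, dist (Ψ x) (Φ (g x)) ≤ r := fun x => (key x).choose_spec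
  have hdev : ∀ x y : X.Rep, |dist x y - dist (g x) (g y)| ≤ 2 * r := by
    intro x y
    have h1 : |dist x y - dist (g x) (g y)| ≤
        dist (Ψ x) (Φ (g x)) + dist (Ψ y) (Φ (g y)) := by
      have h := dist_dist_dist_le (Ψ x) (Ψ y) (Φ (g x)) (Φ (g y))
      rwa [Real.dist_eq, isomΨ.dist_eq, isomΦ.dist_eq] at h
    calc |dist x y - dist (g x) (g y)|
        ≤ dist (Ψ x) (Φ (g x)) + dist (Ψ y) (Φ (g y)) := h1
      _ ≤ r + r := add_le_add (hgd x) (hgd y)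
      _ = 2 * r := by ring
  have hg : Function.Surjective g := by
    intro m
    have h1 : infDist (Φ m) (range Ψ) ≤ hausdorffDist (range Φ) (range Ψ) :=
      infDist_le_hausdorffDist_of_mem (mem_range_self m) hfin
    obtain ⟨p, hp, hpd⟩ := hcΨ.exists_infDist_eq_dist (range_nonempty _) (Φ m)
    obtain ⟨x, rfl⟩ := hp
    have h2 : dist (Φ m) (Ψ x) ≤ r := by
      rw [← hpd]
      rw [hHD] at h1
      exact h1
    refine ⟨x, ?_⟩
    by_contra hne2
    have h4 : dist (g x) m ≤ 2 * r := by
      rw [← isomΦ.dist_eq]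
      calc dist (Φ (g x)) (Φ m)
          ≤ dist (Φ (g x)) (Ψ x) + dist (Ψ x) (Φ m) := dist_triangle _ _ _
        _ ≤ r + r := by
            refine add_le_add ?_ ?_
            · rw [dist_comm]; exact hgd x
            · rw [dist_comm]; exact h2
        _ = 2 * r := by ring
    have h5 := hsR (g x) m hne2
    linarith
  have hsep : ∀ x y : X.Rep, dist x y ≤ 2 * r → g x = g y := by
    intro x y hxy
    by_contra hne2
    have h1 := hdev x y
    have h2 := hsR (g x) (g y) hne2
    rw [abs_le] at h1
    linarith [h1.1]
  have hgc : Continuous g := by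
    rw [Metric.continuous_iff]
    intro b ε hε
    refine ⟨2 * r, by positivity, fun a ha => ?_⟩
    rw [hsep a b ha.le, dist_self]
    exact hε
  -- the maximal deviation is attained and equals 2r
  set Δ : X.Rep → X.Rep → ℝ := fun x y => dist x y - dist (g x) (g y) with hΔdef
  have hΔcont : Continuous fun pq : X.Rep × X.Rep => Δ pq.1 pq.2 :=
    continuous_dist.sub ((hgc.comp continuous_fst).dist (hgc.comp continuous_snd))
  obtain ⟨P, -, hPmax⟩ := isCompact_univ.exists_isMaxOn univ_nonempty
    (hΔcont.abs.continuousOn : ContinuousOn (fun pq : X.Rep × X.Rep => |Δ pq.1 pq.2|) univ)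
  have hPmax' : ∀ x y : X.Rep, |Δ x y| ≤ |Δ P.1 P.2| := fun x y => hPmax (mem_univ (x, y))
  have hwitval : |Δ P.1 P.2| = 2 * r := by
    have hle : |Δ P.1 P.2| ≤ 2 * r := hdev _ _
    by_contra hne2
    have hltv : |Δ P.1 P.2| < 2 * r := lt_of_le_of_ne hle hne2
    have habs0 : 0 ≤ |Δ P.1 P.2| := abs_nonneg _
    have hε0 : 0 < (|Δ P.1 P.2| / 2 + r) / 2 := by positivity
    have hub2 : dist (GromovHausdorff.toGHSpace M) (GromovHausdorff.toGHSpace X.Rep) ≤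
        (|Δ P.1 P.2| / 2 + r) / 2 := by
      refine aux_ghdist_le g hg hε0 ?_
      intro x y
      calc |dist x y - dist (g x) (g y)| ≤ |Δ P.1 P.2| := hPmax' x y
        _ ≤ 2 * ((|Δ P.1 P.2| / 2 + r) / 2) := by linarith
    rw [hdistX] at hub2
    linarith
  -- choice of the block (m1, m2) and of the pinned witness pair (p0, q0)
  obtain ⟨m1, m2, hm12, p0, q0, hw0, hw0'⟩ :
      ∃ m1 m2 : M, m1 ≠ m2 ∧ ∃ p q : X.Rep, |Δ p q| = 2 * r ∧
        (¬ ((g p = m1 ∧ g q = m2) ∨ (g p = m2 ∧ g q = m1)) ∨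
          ∃ x y : X.Rep, g x = m1 ∧ g y = m2 ∧ Δ x y = 2 * r) := by
    by_cases hplus : ∃ x y : X.Rep, g x ≠ g y ∧ Δ x y = 2 * r
    · obtain ⟨x0, y0, hne0, heq0⟩ := hplus
      refine ⟨g x0, g y0, hne0, x0, y0, ?_, Or.inr ⟨x0, y0, rfl, rfl, heq0⟩⟩
      rw [heq0, abs_of_nonneg (by positivity)]
    · by_cases hgP : g P.1 = g P.2
      · refine ⟨mA, mB, hmAB, P.1, P.2, hwitval, Or.inl ?_⟩
        rintro (⟨h1, h2⟩ | ⟨h1, h2⟩)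
        · exact hmAB (by rw [← h1, ← h2, hgP])
        · exact hmAB (by rw [← h1, ← h2, hgP])
      · have hthird : ∃ m'' : M, m'' ≠ g P.1 ∧ m'' ≠ g P.2 := by
          by_contra hno
          push_neg at hno
          have hsurj2 : Function.Surjective (fun b : Bool => if b then g P.1 else g P.2) := by
            intro z
            rcases em (z = g P.1) with h | h
            · exact ⟨true, by simp [h.symm]⟩
            · obtain h2 := hno z (fun hz => h hz)
              exact ⟨false, by simp [h2.symm]⟩
          have := Fintype.card_le_of_surjective _ hsurj2
          simp at this
          omega
        obtain ⟨m'', hm''1, hm''2⟩ := hthird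
        refine ⟨g P.1, m'', fun h => hm''1 h.symm, P.1, P.2, hwitval, Or.inl ?_⟩
        rintro (⟨h1, h2⟩ | ⟨h1, h2⟩)
        · exact hm''2 h2.symm
        · exact hm''1 h1.symm
  -- block data for stage A
  set B : X.Rep → X.Rep → Prop :=
    fun x y => (g x = m1 ∧ g y = m2) ∨ (g x = m2 ∧ g y = m1) with hBdef
  set K : Set (X.Rep × X.Rep) := {pq | g pq.1 = m1 ∧ g pq.2 = m2} with hKdef
  have hKne : K.Nonempty :=
    ⟨(surjInv hg m1, surjInv hg m2), surjInv_eq hg m1, surjInv_eq hg m2⟩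
  have hKclosed : IsClosed K := by
    have hKeq : K = (fun pq : X.Rep × X.Rep => (g pq.1, g pq.2)) ⁻¹' {(m1, m2)} := by
      ext pq
      simp [hKdef, Prod.ext_iff]
    rw [hKeq]
    exact IsClosed.preimage ((hgc.comp continuous_fst).prodMk (hgc.comp continuous_snd))
      isClosed_singleton
  obtain ⟨Q, hQK, hQmax⟩ := hKclosed.isCompact.exists_isMaxOn hKne hΔcont.continuousOn
  have hQ1 : g Q.1 = m1 := hQK.1
  have hQ2 : g Q.2 = m2 := hQK.2
  set A : ℝ := Δ Q.1 Q.2 with hAdef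
  have hAdef' : A = dist Q.1 Q.2 - dist (g Q.1) (g Q.2) := hAdef
  set c : ℝ := 2 * r - A with hcdef
  have hΔabs : ∀ x y : X.Rep, |Δ x y| ≤ 2 * r := hdev
  have hA2r : A ≤ 2 * r := le_trans (le_abs_self _) (hΔabs Q.1 Q.2)
  have hAneg : -(2 * r) ≤ A := (abs_le.1 (hΔabs Q.1 Q.2)).1
  have hc0 : 0 ≤ c := by rw [hcdef]; linarith
  have hc4r : c ≤ 4 * r := by rw [hcdef]; linarith
  have hBmax : ∀ x y : X.Rep, B x y → Δ x y ≤ A := by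
    rintro x y (⟨h1, h2⟩ | ⟨h1, h2⟩)
    · exact hQmax (show (x, y) ∈ K from ⟨h1, h2⟩)
    · have hxy : Δ x y = Δ y x := by
        simp only [hΔdef, dist_comm x y, dist_comm (g x) (g y)]
      rw [hxy]
      exact hQmax (show (y, x) ∈ K from ⟨h2, h1⟩)
  have hpin : (¬ B p0 q0) ∨ c = 0 := by
    rcases hw0' with h | ⟨x, y, hx, hy, hxy⟩
    · exact Or.inl h
    · right
      have h1 : Δ x y ≤ A := hBmax x y (Or.inl ⟨hx, hy⟩)
      rw [hcdef]
      linarith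
  -- the clamping function
  set cl : ℝ → ℝ := fun u => max 0 (min u 1) with hcldef
  have hcl0 : ∀ u, 0 ≤ cl u := fun u => le_max_left _ _
  have hcl1 : ∀ u, cl u ≤ 1 := fun u => max_le (by norm_num) (min_le_right _ _)
  have hclz : cl 0 = 0 := by simp [hcldef]
  have hclo : cl 1 = 1 := by norm_num [hcldef]
  have hcllt : ∀ u : ℝ, u < 1 → cl u < 1 := by
    intro u hu
    simp only [hcldef]
    rw [min_eq_left hu.le]
    exact max_lt one_pos hu
  have hclge : ∀ u : ℝ, u < 1 → u ≤ cl u := by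
    intro u hu
    simp only [hcldef]
    rw [min_eq_left hu.le]
    exact le_max_right _ _
  have hcllip : ∀ u v : ℝ, |cl u - cl v| ≤ |u - v| := by
    have hmono : ∀ a b : ℝ, a ≤ b → cl b - cl a ≤ b - a ∧ 0 ≤ cl b - cl a := by
      intro a b hab
      constructor
      · simp only [hcldef, max_def, min_def]
        split_ifs <;> linarith
      · have h1 : cl a ≤ cl b := by
          simp only [hcldef]
          exact max_le_max le_rfl (min_le_min hab le_rfl)
        linarith
    intro u v
    rcases le_total u v with huv | huv
    · obtain ⟨ha, hb⟩ := hmono u v huv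
      rw [abs_le]
      constructor <;> cases abs_cases (u - v) <;> linarith
    · obtain ⟨ha, hb⟩ := hmono v u huv
      rw [abs_le]
      constructor <;> cases abs_cases (u - v) <;> linarith
  -- stage A metrics
  set dA : ℝ → X.Rep → X.Rep → ℝ :=
    fun v x y => dist x y + (if B x y then cl v * c else 0) with hdAdef
  have hbump_nn : ∀ v (x y : X.Rep), 0 ≤ (if B x y then cl v * c else 0) := by
    intro v x y
    split
    · exact mul_nonneg (hcl0 v) hc0
    · exact le_rfl
  have hdAnn : ∀ v (x y : X.Rep), 0 ≤ dA v x y := by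
    intro v x y
    have h1 := hbump_nn v x y
    have h2 := dist_nonneg (x := x) (y := y)
    simp only [hdAdef]
    linarith
  have hdAge : ∀ v (x y : X.Rep), dist x y ≤ dA v x y := by
    intro v x y
    have h1 := hbump_nn v x y
    simp only [hdAdef]
    linarith
  have hBxx : ∀ x : X.Rep, ¬ B x x := by
    rintro x (⟨h1, h2⟩ | ⟨h1, h2⟩)
    · exact hm12 (h1.symm.trans h2)
    · exact hm12 (h2.symm.trans h1)
  have hdA0 : ∀ v (x : X.Rep), dA v x x = 0 := by
    intro v x
    simp [hdAdef, hBxx x]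
  have hBsymm : ∀ x y : X.Rep, B x y → B y x := by
    rintro x y (⟨h1, h2⟩ | ⟨h1, h2⟩)
    · exact Or.inr ⟨h2, h1⟩
    · exact Or.inl ⟨h2, h1⟩
  have hdAs : ∀ v (x y : X.Rep), dA v x y = dA v y x := by
    intro v x y
    simp only [hdAdef, dist_comm x y]
    congr 1
    by_cases h : B x y
    · rw [if_pos h, if_pos (hBsymm x y h)]
    · rw [if_neg h, if_neg (fun h' => h (hBsymm y x h'))]
  have hclc_le : ∀ v : ℝ, cl v * c ≤ c := by
    intro v
    calc cl v * c ≤ 1 * c := mul_le_mul_of_nonneg_right (hcl1 v) hc0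
      _ = c := one_mul c
  have hclc_nn : ∀ v : ℝ, 0 ≤ cl v * c := fun v => mul_nonneg (hcl0 v) hc0
  have hdevA : ∀ v (x y : X.Rep), |dA v x y - dist (g x) (g y)| ≤ 2 * r := by
    intro v x y
    have h2 := hdev x y
    rw [abs_le] at h2
    by_cases hbxy : B x y
    · have h1 : Δ x y ≤ A := hBmax x y hbxy
      simp only [hΔdef] at h1
      have h4 := hclc_nn v
      have h5 := hclc_le v
      simp only [hdAdef, if_pos hbxy]
      rw [abs_le]
      constructor <;> linarith
    · simp only [hdAdef, if_neg hbxy, add_zero]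
      exact hdev x y
  have hdAtri : ∀ v (x y z : X.Rep), dA v x z ≤ dA v x y + dA v y z := by
    intro v x y z
    have htri := dist_triangle x y z
    by_cases hxz : B x z
    · by_cases hyx : g y = g x
      · have hByz : B y z := by
          rcases hxz with ⟨h1, h2⟩ | ⟨h1, h2⟩
          · exact Or.inl ⟨hyx.trans h1, h2⟩
          · exact Or.inr ⟨hyx.trans h1, h2⟩
        have hnBxy : ¬ B x y := by
          rintro (⟨h1, h2⟩ | ⟨h1, h2⟩)
          · exact hm12 (h1.symm.trans (hyx.symm.trans h2))
          · exact hm12 (h2.symm.trans (hyx.trans h1))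
        simp only [hdAdef, if_pos hxz, if_pos hByz, if_neg hnBxy, add_zero]
        linarith
      · by_cases hyz : g y = g z
        · have hBxy : B x y := by
            rcases hxz with ⟨h1, h2⟩ | ⟨h1, h2⟩
            · exact Or.inl ⟨h1, hyz.trans h2⟩
            · exact Or.inr ⟨h1, hyz.trans h2⟩
          have hnByz : ¬ B y z := by
            rintro (⟨h1, h2⟩ | ⟨h1, h2⟩)
            · exact hm12 (h1.symm.trans (hyz.trans h2))
            · exact hm12 (h2.symm.trans (hyz.symm.trans h1))
          simp only [hdAdef, if_pos hxz, if_pos hBxy, if_neg hnByz, add_zero]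
          linarith
        · have hgxz : g x ≠ g z := by
            rcases hxz with ⟨h1, h2⟩ | ⟨h1, h2⟩
            · rw [h1, h2]; exact hm12
            · rw [h1, h2]; exact hm12.symm
          have hnBxy : ¬ B x y := by
            rcases hxz with ⟨h1, h2⟩ | ⟨h1, h2⟩ <;> rintro (⟨h3, h4⟩ | ⟨h3, h4⟩)
            · exact hyz (h4.trans h2.symm)
            · exact hm12 (h1.symm.trans h3)
            · exact hm12 (h3.symm.trans h1)
            · exact hyz (h4.trans h2.symm)
          have hnByz : ¬ B y z := by
            rcases hxz with ⟨h1, h2⟩ | ⟨h1, h2⟩ <;> rintro (⟨h3, h4⟩ | ⟨h3, h4⟩)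
            · exact hyx (h3.trans h1.symm)
            · exact hm12 (h4.symm.trans h2)
            · exact hm12 (h2.symm.trans h4)
            · exact hyx (h3.trans h1.symm)
          have h6 := htR (g x) (g y) (g z) (fun h => hyx h.symm) hyz hgxz
          have hΔxz : Δ x z ≤ A := hBmax x z hxz
          simp only [hΔdef] at hΔxz
          have hxy2 := (abs_le.1 (hdev x y)).1
          have hyz2 := (abs_le.1 (hdev y z)).1
          have h5 := hclc_le v
          simp only [hdAdef, if_pos hxz, if_neg hnBxy, if_neg hnByz, add_zero]
          linarith
    · have h1 := hbump_nn v x y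
      have h2 := hbump_nn v y z
      simp only [hdAdef, if_neg hxz, add_zero]
      linarith
  have hdApos : ∀ v (x y : X.Rep), x ≠ y → dA v x y ≠ 0 := by
    intro v x y hne
    have h1 := dist_pos.2 hne
    have h2 := hbump_nn v x y
    have : 0 < dA v x y := by
      simp only [hdAdef]
      linarith
    exact ne_of_gt this
  set mAf : ℝ → MB X.Rep :=
    fun v => ⟨remetrize X.Rep (dA v) (hdA0 v) (hdAs v) (hdAtri v) (hdApos v)⟩ with hmAdef
  have hcAf : ∀ v : ℝ, CPack X.Rep (mAf v) := by
    intro v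
    refine ⟨@aux_compactSpace X.Rep X.Rep _ (mAf v).m _ id surjective_id (2 * r) 1
      (by positivity) one_pos ?_⟩
    intro x y hxy
    show dA v x y ≤ 1 * dist x y
    have hgxy : g x = g y := hsep x y hxy.le
    have hnB : ¬ B x y := by
      rintro (⟨h1, h2⟩ | ⟨h1, h2⟩)
      · exact hm12 ((h1.symm.trans hgxy).trans h2)
      · exact hm12 ((h2.symm.trans hgxy.symm).trans h1)
    simp only [hdAdef, if_neg hnB, add_zero, one_mul]
    exact le_rfl
  set fA : ℝ → GromovHausdorff.GHSpace :=
    fun v => @GromovHausdorff.toGHSpace X.Rep (mAf v).m (hcAf v).c _ with hfAdef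
  have hsphA : ∀ v : ℝ, dist (GromovHausdorff.toGHSpace M) (fA v) = r := by
    intro v
    simp only [hfAdef]
    refine @aux_sphere_eq M X.Rep _ _ _ (mAf v).m (hcAf v).c _ r hr0 hsR heR g hg ?_ ?_
    · intro x y
      show |dA v x y - dist (g x) (g y)| ≤ 2 * r
      exact hdevA v x y
    · refine ⟨p0, q0, ?_⟩
      show |dA v p0 q0 - dist (g p0) (g q0)| = 2 * r
      have hbz : (if B p0 q0 then cl v * c else 0) = 0 := by
        rcases hpin with hnb | hcz
        · rw [if_neg hnb]
        · rw [hcz, mul_zero, ite_self]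
      simp only [hdAdef, hbz, add_zero]
      exact hw0
  have hfAlip : ∀ u v : ℝ, dist (fA u) (fA v) ≤ (4 * r) * |u - v| := by
    intro u v
    rcases eq_or_ne (cl u) (cl v) with hcluv | hcluv
    · have heq : fA u = fA v := by
        simp only [hfAdef]
        refine aux_toGHSpace_congr _ _ _ _ (fun x y => ?_)
        show dA u x y = dA v x y
        simp only [hdAdef, hcluv]
      rw [heq, dist_self]
      positivity
    · have huv : u ≠ v := fun h => hcluv (by rw [h])
      have habs : 0 < |u - v| := abs_pos.2 (sub_ne_zero.2 huv)
      have hdevid : ∀ x y : X.Rep, |dA v x y - dA u x y| ≤ 2 * (2 * r * |u - v|) := by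
        intro x y
        have hcomm : |v - u| = |u - v| := abs_sub_comm v u
        by_cases hbxy : B x y
        · have heq2 : dA v x y - dA u x y = (cl v - cl u) * c := by
            simp only [hdAdef, if_pos hbxy]
            ring
          rw [heq2, abs_mul, abs_of_nonneg hc0]
          have h1 := hcllip v u
          rw [hcomm] at h1
          nlinarith [abs_nonneg (cl v - cl u)]
        · have heq2 : dA v x y - dA u x y = 0 := by
            simp only [hdAdef, if_neg hbxy]
            ring
          rw [heq2, abs_zero]
          positivity
      have hd := @aux_ghdist_le X.Rep X.Rep (mAf u).m (hcAf u).c _ (mAf v).m (hcAf v).c _ id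
        surjective_id (2 * r * |u - v|) (by positivity) hdevid
      have hd' : dist (fA u) (fA v) ≤ 2 * r * |u - v| := hd
      nlinarith [abs_nonneg (u - v)]
  have hfAmem : ∀ v : ℝ, fA v ∈ {Y : GromovHausdorff.GHSpace |
      dist (GromovHausdorff.toGHSpace M) Y = r} := fun v => hsphA v
  have joinA : JoinedIn {Y : GromovHausdorff.GHSpace |
      dist (GromovHausdorff.toGHSpace M) Y = r} (fA 0) (fA 1) :=
    aux_joinedIn fA hfAlip hfAmem
  have hfA0 : fA 0 = X := by
    have h1 : fA 0 = GromovHausdorff.toGHSpace X.Rep := by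
      simp only [hfAdef]
      refine aux_toGHSpace_congr _ _ _ _ (fun x y => ?_)
      show dA 0 x y = dist x y
      simp only [hdAdef, hclz, zero_mul, ite_self, add_zero]
    rw [h1, hXr]
  -- stage B : collapse the fibers and straighten the distances
  have hQB : B Q.1 Q.2 := Or.inl ⟨hQ1, hQ2⟩
  have hgneQ : g Q.1 ≠ g Q.2 := by rw [hQ1, hQ2]; exact hm12
  have hpinB : dA 1 Q.1 Q.2 - dist (g Q.1) (g Q.2) = 2 * r := by
    simp only [hdAdef, if_pos hQB, hclo, one_mul]
    rw [hcdef] at *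
    linarith [hAdef']
  set dB : ℝ → X.Rep → X.Rep → ℝ :=
    fun u x y => (1 - cl u) * dA 1 x y + cl u * dZ (g x) (g y) with hdBdef
  have hdB0 : ∀ u (x : X.Rep), dB u x x = 0 := by
    intro u x
    simp [hdBdef, hdA0, hdZ0]
  have hdBs : ∀ u (x y : X.Rep), dB u x y = dB u y x := by
    intro u x y
    simp only [hdBdef]
    rw [hdAs 1 x y, hdZs (g x) (g y)]
  have hdBtri : ∀ u (x y z : X.Rep), dB u x z ≤ dB u x y + dB u y z := by
    intro u x y z
    have h1 := hdAtri 1 x y z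
    have h2 := hdZtri (g x) (g y) (g z)
    have h3 : (0:ℝ) ≤ 1 - cl u := by linarith [hcl1 u]
    have h4 := hcl0 u
    simp only [hdBdef]
    nlinarith [mul_le_mul_of_nonneg_left h1 h3, mul_le_mul_of_nonneg_left h2 h4]
  have hdBpos : ∀ u : ℝ, u < 1 → ∀ x y : X.Rep, x ≠ y → dB u x y ≠ 0 := by
    intro u hu x y hne
    have hcllt' : cl u < 1 := hcllt u hu
    have hpos1 : 0 < dA 1 x y := lt_of_lt_of_le (dist_pos.2 hne) (hdAge 1 x y)
    have hz := hdZnn (g x) (g y)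
    have : 0 < dB u x y := by
      simp only [hdBdef]
      nlinarith [hcl0 u]
    exact ne_of_gt this
  set mBf : ∀ u : ℝ, u < 1 → MB X.Rep := fun u hu =>
    ⟨remetrize X.Rep (dB u) (hdB0 u) (hdBs u) (hdBtri u) (hdBpos u hu)⟩ with hmBdef
  have hcBf : ∀ (u : ℝ) (hu : u < 1), CPack X.Rep (mBf u hu) := by
    intro u hu
    refine ⟨@aux_compactSpace X.Rep X.Rep (mAf 1).m (mBf u hu).m (hcAf 1).c id surjective_id
      (2 * r) 1 (by positivity) one_pos ?_⟩
    intro x y hxy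
    have hxy' : dA 1 x y < 2 * r := hxy
    show dB u x y ≤ 1 * dA 1 x y
    have hgxy : g x = g y := hsep x y (le_trans (hdAge 1 x y) hxy'.le)
    have hzz : dZ (g x) (g y) = 0 := by rw [hgxy, hdZ0]
    simp only [hdBdef, hzz, mul_zero, add_zero, one_mul]
    nlinarith [hcl0 u, hcl1 u, hdAnn 1 x y]
  set fB : ℝ → GromovHausdorff.GHSpace := fun u =>
    if hu : u < 1 then @GromovHausdorff.toGHSpace X.Rep (mBf u hu).m (hcBf u hu).c _ else zC
    with hfBdef
  have hgapA : ∀ x y : X.Rep, |dA 1 x y - dZ (g x) (g y)| ≤ 4 * r := by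
    intro x y
    have h1 := hdevA 1 x y
    by_cases hgxy : g x = g y
    · have hzz : dZ (g x) (g y) = 0 := by rw [hgxy, hdZ0]
      rw [hgxy, dist_self, sub_zero] at h1
      rw [hzz, sub_zero]
      have := abs_nonneg (dA 1 x y)
      linarith
    · have hzz : dZ (g x) (g y) = dist (g x) (g y) + 2 * r := by
        simp only [hdZdef, if_neg hgxy]
      rw [hzz]
      rw [abs_le] at h1 ⊢
      constructor <;> [linarith [h1.1]; linarith [h1.2]]
  have hsphB : ∀ (u : ℝ) (hu : u < 1),
      dist (GromovHausdorff.toGHSpace M)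
        (@GromovHausdorff.toGHSpace X.Rep (mBf u hu).m (hcBf u hu).c _) = r := by
    intro u hu
    refine @aux_sphere_eq M X.Rep _ _ _ (mBf u hu).m (hcBf u hu).c _ r hr0 hsR heR g hg ?_ ?_
    · intro x y
      show |dB u x y - dist (g x) (g y)| ≤ 2 * r
      have h1 := hdevA 1 x y
      rw [abs_le] at h1
      have hw0'' := hcl0 u
      have hw1 := hcl1 u
      by_cases hgxy : g x = g y
      · have hzz : dZ (g x) (g y) = 0 := by rw [hgxy, hdZ0]
        have h2 : dist (g x) (g y) = 0 := by rw [hgxy, dist_self]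
        rw [h2] at h1
        simp only [hdBdef, hzz, mul_zero, add_zero, h2, sub_zero]
        rw [abs_le]
        constructor
        · nlinarith [hdAnn 1 x y]
        · nlinarith [hdAnn 1 x y]
      · have hzz : dZ (g x) (g y) = dist (g x) (g y) + 2 * r := by
          simp only [hdZdef, if_neg hgxy]
        simp only [hdBdef, hzz]
        rw [abs_le]
        constructor <;> nlinarith [h1.1, h1.2]
    · refine ⟨Q.1, Q.2, ?_⟩
      show |dB u Q.1 Q.2 - dist (g Q.1) (g Q.2)| = 2 * r
      have hzz : dZ (g Q.1) (g Q.2) = dist (g Q.1) (g Q.2) + 2 * r := by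
        simp only [hdZdef, if_neg hgneQ]
      have hval : dB u Q.1 Q.2 - dist (g Q.1) (g Q.2) = 2 * r := by
        simp only [hdBdef, hzz]
        linear_combination (1 - cl u) * hpinB
      rw [hval, abs_of_nonneg (by positivity)]
  have hfBmem : ∀ u : ℝ, fB u ∈ {Y : GromovHausdorff.GHSpace |
      dist (GromovHausdorff.toGHSpace M) Y = r} := by
    intro u
    simp only [hfBdef]
    by_cases hu : u < 1
    · rw [dif_pos hu]
      exact hsphB u hu
    · rw [dif_neg hu]
      exact hzCS
  have hgap4 : ∀ (u : ℝ) (x y : X.Rep),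
      |dB u x y - dZ (g x) (g y)| ≤ (1 - cl u) * (4 * r) := by
    intro u x y
    have h := hgapA x y
    have h3 : (0:ℝ) ≤ 1 - cl u := by linarith [hcl1 u]
    have heq : dB u x y - dZ (g x) (g y) = (1 - cl u) * (dA 1 x y - dZ (g x) (g y)) := by
      simp only [hdBdef]
      ring
    rw [heq, abs_mul, abs_of_nonneg h3]
    exact mul_le_mul_of_nonneg_left h h3
  have hfBlip : ∀ u v : ℝ, dist (fB u) (fB v) ≤ (4 * r) * |u - v| := by
    have hkey : ∀ u v : ℝ, u < 1 → ¬ v < 1 → dist (fB u) (fB v) ≤ (4 * r) * |u - v| := by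
      intro u v hu hv
      have hfv : fB v = zC := by simp only [hfBdef]; rw [dif_neg hv]
      have hfu : fB u =
          @GromovHausdorff.toGHSpace X.Rep (mBf u hu).m (hcBf u hu).c _ := by
        simp only [hfBdef]; rw [dif_pos hu]
      have hclu : cl u < 1 := hcllt u hu
      have hεpos : 0 < 2 * r * (1 - cl u) := by nlinarith
      have hdevB2 : ∀ x y : X.Rep,
          |dB u x y - dZ (g x) (g y)| ≤ 2 * (2 * r * (1 - cl u)) := by
        intro x y
        have := hgap4 u x y
        nlinarith
      have hd := @aux_ghdist_le M X.Rep mZ.m hcZ.c _ (mBf u hu).m (hcBf u hu).c _ g hg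
        (2 * r * (1 - cl u)) hεpos hdevB2
      rw [hfu, hfv, hzCdef, dist_comm]
      have hvge : (1:ℝ) ≤ v := not_lt.1 hv
      have habs : |u - v| = v - u := by
        rw [abs_sub_comm, abs_of_nonneg (by linarith)]
      have hge := hclge u hu
      calc dist (@GromovHausdorff.toGHSpace M mZ.m hcZ.c _)
            (@GromovHausdorff.toGHSpace X.Rep (mBf u hu).m (hcBf u hu).c _)
          ≤ 2 * r * (1 - cl u) := hd
        _ ≤ (4 * r) * |u - v| := by rw [habs]; nlinarith
    intro u v
    by_cases hu : u < 1 <;> by_cases hv : v < 1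
    · rcases eq_or_ne (cl u) (cl v) with hcluv | hcluv
      · have heq : fB u = fB v := by
          simp only [hfBdef]
          rw [dif_pos hu, dif_pos hv]
          refine aux_toGHSpace_congr _ _ _ _ (fun x y => ?_)
          show dB u x y = dB v x y
          simp only [hdBdef, hcluv]
        rw [heq, dist_self]
        positivity
      · have huv : u ≠ v := fun h => hcluv (by rw [h])
        have habs : 0 < |u - v| := abs_pos.2 (sub_ne_zero.2 huv)
        have hdevid : ∀ x y : X.Rep, |dB v x y - dB u x y| ≤ 2 * (2 * r * |u - v|) := by
          intro x y
          have heq2 : dB v x y - dB u x y =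
              (cl u - cl v) * (dA 1 x y - dZ (g x) (g y)) := by
            simp only [hdBdef]
            ring
          rw [heq2, abs_mul]
          have h1 := hcllip u v
          have h2 := hgapA x y
          nlinarith [abs_nonneg (cl u - cl v), abs_nonneg (dA 1 x y - dZ (g x) (g y)),
            abs_nonneg (u - v)]
        have hfu : fB u =
            @GromovHausdorff.toGHSpace X.Rep (mBf u hu).m (hcBf u hu).c _ := by
          simp only [hfBdef]; rw [dif_pos hu]
        have hfv : fB v =
            @GromovHausdorff.toGHSpace X.Rep (mBf v hv).m (hcBf v hv).c _ := by
          simp only [hfBdef]; rw [dif_pos hv]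
        have hd := @aux_ghdist_le X.Rep X.Rep (mBf u hu).m (hcBf u hu).c _
          (mBf v hv).m (hcBf v hv).c _ id surjective_id (2 * r * |u - v|)
          (by positivity) hdevid
        rw [hfu, hfv]
        calc dist (@GromovHausdorff.toGHSpace X.Rep (mBf u hu).m (hcBf u hu).c _)
              (@GromovHausdorff.toGHSpace X.Rep (mBf v hv).m (hcBf v hv).c _)
            ≤ 2 * r * |u - v| := hd
          _ ≤ (4 * r) * |u - v| := by nlinarith [abs_nonneg (u - v)]
    · exact hkey u v hu hv
    · have h := hkey v u hv hu
      rw [dist_comm] at h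
      rw [abs_sub_comm] at h
      exact h
    · have heq : fB u = fB v := by
        simp only [hfBdef]
        rw [dif_neg hu, dif_neg hv]
      rw [heq, dist_self]
      positivity
  have joinB : JoinedIn {Y : GromovHausdorff.GHSpace |
      dist (GromovHausdorff.toGHSpace M) Y = r} (fB 0) (fB 1) :=
    aux_joinedIn fB hfBlip hfBmem
  have hfB1 : fB 1 = zC := by
    simp only [hfBdef]
    rw [dif_neg (lt_irrefl 1)]
  have hfB0 : fB 0 = fA 1 := by
    simp only [hfBdef, hfAdef]
    rw [dif_pos one_pos]
    refine aux_toGHSpace_congr _ _ _ _ (fun x y => ?_)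
    show dB 0 x y = dA 1 x y
    simp only [hdBdef, hclz]
    ring
  rw [hfA0] at joinA
  rw [hfB0, hfB1] at joinB
  exact joinA.trans joinB
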